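/- Let y ∈ F(X_r). The flow π_y defined by y on the Schreier graph Sch_{d-1}(y) of the cyclic subgroup ⟨y⟩ in S_{r,d-1} is identically zero if and only if y = 1 in S_{r,d}. -/

import Mathlib

open scoped Classical

attribute [local instance] derivedSeries_normal

/-- The set of right cosets `Hg` of a subgroup `H` of `G`. -/
def RCoset {G : Type*} [Group G] (H : Subgroup G) := Quotient (QuotientGroup.rightRel H)

/-- The root of the Schreier graph: the coset `H·1 = H`. -/
def rcRoot {G : Type*} [Group G] (H : Subgroup G) : RCoset H := Quotient.mk'' 1

/-- Right multiplication on right cosets: `Hg ↦ Hgx` (the edges of the Schreier graph). -/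
def rcStep {G : Type*} [Group G] (H : Subgroup G) (v : RCoset H) (g : G) : RCoset H :=
  Quotient.map' (· * g)
    (fun a b hab => by
      rw [QuotientGroup.rightRel_apply] at hab ⊢
      simpa [mul_assoc] using hab) v

/-- The flow defined by a word traced from a vertex `v` in a complete folded inverse
`X`-digraph whose vertices are acted on by a group `G` via `act` (e.g. the Schreier
graph of a subgroup, with vertices the right cosets and `act` right multiplication);
`emb : X → G` names the generators.  The positive edge from vertex `a` labeled `y`
goes from `a` to `act a (emb y)`. -/
noncomputable def vFlow {V G X : Type*} [Group G] (act : V → G → V) (emb : X → G) :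
    V → List (X × Bool) → V → X → ℤ
  | _, [], _, _ => 0
  | v, (x, true) :: c, a, y =>
      (if a = v ∧ y = x then 1 else 0) + vFlow act emb (act v (emb x)) c a y
  | v, (x, false) :: c, a, y =>
      (if a = act v (emb x)⁻¹ ∧ y = x then -1 else 0) + vFlow act emb (act v (emb x)⁻¹) c a y

open scoped commutatorElement

namespace Stmt13Aux

variable {G : Type*} [Group G] {X : Type*}

theorem rcStep_mk (H : Subgroup G) (a g : G) :
    rcStep H (Quotient.mk'' a) g = Quotient.mk'' (a * g) := rfl

theorem rcStep_one (H : Subgroup G) (v : RCoset H) : rcStep H v 1 = v := by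
  induction v using Quotient.inductionOn' with
  | h a => rw [rcStep_mk, mul_one]

theorem rcStep_mul (H : Subgroup G) (v : RCoset H) (g g' : G) :
    rcStep H (rcStep H v g) g' = rcStep H v (g * g') := by
  induction v using Quotient.inductionOn' with
  | h a => rw [rcStep_mk, rcStep_mk, rcStep_mk, mul_assoc]

theorem rcStep_root (H : Subgroup G) {h : G} (hh : h ∈ H) :
    rcStep H (rcRoot H) h = rcRoot H := by
  show rcStep H (Quotient.mk'' 1) h = Quotient.mk'' 1
  rw [rcStep_mk, one_mul]
  exact Quotient.eq''.mpr (QuotientGroup.rightRel_apply.mpr (by simpa using inv_mem hh))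

theorem mem_of_mk_eq (H : Subgroup G) {a b : G}
    (hab : (Quotient.mk'' a : RCoset H) = Quotient.mk'' b) : a * b⁻¹ ∈ H := by
  have h := QuotientGroup.rightRel_apply.mp (Quotient.eq''.mp hab)
  simpa using inv_mem h

/-- The flow of a word as a finitely supported function on the edges. -/
noncomputable def flowF (H : Subgroup G) (emb : X → G) :
    RCoset H → List (X × Bool) → (RCoset H × X →₀ ℤ)
  | _, [] => 0
  | v, (x, true) :: c => Finsupp.single (v, x) 1 + flowF H emb (rcStep H v (emb x)) c
  | v, (x, false) :: c =>
      Finsupp.single (rcStep H v (emb x)⁻¹, x) (-1) + flowF H emb (rcStep H v (emb x)⁻¹) c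

theorem vFlow_eq_flowF (H : Subgroup G) (emb : X → G) :
    ∀ (c : List (X × Bool)) (v a : RCoset H) (x : X),
      vFlow (rcStep H) emb v c a x = flowF H emb v c (a, x)
  | [], v, a, x => rfl
  | (z, true) :: c, v, a, x => by
      rw [vFlow, flowF, Finsupp.add_apply, Finsupp.single_apply,
        vFlow_eq_flowF H emb c]
      congr 1
      split_ifs with h1 h2 h2
      · rfl
      · obtain ⟨rfl, rfl⟩ := h1; exact absurd rfl h2
      · exact absurd ⟨(Prod.ext_iff.mp h2).1.symm, (Prod.ext_iff.mp h2).2.symm⟩ h1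
      · rfl
  | (z, false) :: c, v, a, x => by
      rw [vFlow, flowF, Finsupp.add_apply, Finsupp.single_apply,
        vFlow_eq_flowF H emb c]
      congr 1
      split_ifs with h1 h2 h2
      · rfl
      · obtain ⟨rfl, rfl⟩ := h1; exact absurd rfl h2
      · exact absurd ⟨(Prod.ext_iff.mp h2).1.symm, (Prod.ext_iff.mp h2).2.symm⟩ h1
      · rfl

/-- The "flow group": pairs of a group element and a vertex-indexed family of flows. -/
def FlowC {G : Type*} [Group G] (H : Subgroup G) (X : Type*) :=
  G × (RCoset H → (RCoset H × X →₀ ℤ))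

variable (H : Subgroup G)

noncomputable instance : Mul (FlowC H X) :=
  ⟨fun p q => (p.1 * q.1, fun u => p.2 u + q.2 (rcStep H u p.1))⟩

noncomputable instance : One (FlowC H X) := ⟨(1, fun _ => 0)⟩

noncomputable instance : Inv (FlowC H X) := ⟨fun p => (p.1⁻¹, fun u => -p.2 (rcStep H u p.1⁻¹))⟩

theorem FlowC.mul_def (p q : FlowC H X) :
    p * q = (p.1 * q.1, fun u => p.2 u + q.2 (rcStep H u p.1)) := rfl

theorem FlowC.one_def : (1 : FlowC H X) = ((1 : G), fun _ => 0) := rfl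

theorem FlowC.inv_def (p : FlowC H X) :
    p⁻¹ = (p.1⁻¹, fun u => -p.2 (rcStep H u p.1⁻¹)) := rfl

noncomputable instance : Group (FlowC H X) where
  mul_assoc p q r := Prod.ext (mul_assoc _ _ _) (funext fun u => by
    show (p.2 u + q.2 (rcStep H u p.1)) + r.2 (rcStep H u (p.1 * q.1)) = _
    rw [← rcStep_mul, add_assoc]; rfl)
  one_mul p := Prod.ext (one_mul _) (funext fun u => by
    show 0 + p.2 (rcStep H u 1) = p.2 u
    rw [rcStep_one, zero_add])
  mul_one p := Prod.ext (mul_one _) (funext fun u => by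
    show p.2 u + 0 = p.2 u
    rw [add_zero])
  inv_mul_cancel p := Prod.ext (inv_mul_cancel _) (funext fun u => by
    show -p.2 (rcStep H u p.1⁻¹) + p.2 (rcStep H u p.1⁻¹) = 0
    rw [neg_add_cancel])

variable (emb : X → G)

/-- The universal flow homomorphism. -/
noncomputable def ΦF : FreeGroup X →* FlowC H X :=
  FreeGroup.lift fun x => ((emb x, fun u => Finsupp.single (u, x) 1) : FlowC H X)

theorem ΦF_of (x : X) :
    ΦF H emb (FreeGroup.of x) = ((emb x, fun u => Finsupp.single (u, x) 1) : FlowC H X) :=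
  FreeGroup.lift_apply_of

theorem ΦF_mk : ∀ c : List (X × Bool),
    ΦF H emb (FreeGroup.mk c) =
      ((FreeGroup.lift emb (FreeGroup.mk c), fun u => flowF H emb u c) : FlowC H X)
  | [] => by
      rw [← FreeGroup.one_eq_mk, map_one, map_one]
      rfl
  | (x, true) :: c => by
      have hmk : FreeGroup.mk ((x, true) :: c) = FreeGroup.of x * FreeGroup.mk c := by
        rw [FreeGroup.of, FreeGroup.mul_mk]; rfl
      rw [hmk, map_mul, map_mul, ΦF_of, FreeGroup.lift_apply_of, ΦF_mk ((c : List (X × Bool)))]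
      refine Prod.ext rfl (funext fun u => ?_)
      show Finsupp.single (u, x) 1 + flowF H emb (rcStep H u (emb x)) c
        = flowF H emb u ((x, true) :: c)
      rw [flowF]
  | (x, false) :: c => by
      have hof : (FreeGroup.of x)⁻¹ = FreeGroup.mk [(x, false)] := by
        rw [FreeGroup.of, FreeGroup.inv_mk]; rfl
      have hmk : FreeGroup.mk ((x, false) :: c) = (FreeGroup.of x)⁻¹ * FreeGroup.mk c := by
        rw [hof, FreeGroup.mul_mk]; rfl
      rw [hmk, map_mul, map_mul, map_inv, map_inv, ΦF_of, FreeGroup.lift_apply_of,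
        ΦF_mk ((c : List (X × Bool)))]
      refine Prod.ext rfl (funext fun u => ?_)
      show -Finsupp.single (rcStep H u (emb x)⁻¹, x) 1 + flowF H emb (rcStep H u (emb x)⁻¹) c
      = flowF H emb u ((x, false) :: c)
      rw [flowF, ← Finsupp.single_neg]

theorem ΦF_fst (w : FreeGroup X) : (ΦF H emb w).1 = FreeGroup.lift emb w := by
  conv_lhs => rw [← FreeGroup.mk_toWord (x := w), ΦF_mk]
  rw [FreeGroup.mk_toWord]

theorem ΦF_snd (w : FreeGroup X) (c : List (X × Bool)) (hc : FreeGroup.mk c = w) :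
    (ΦF H emb w).2 = fun u => flowF H emb u c := by
  conv_lhs => rw [← hc, ΦF_mk]

theorem rootflow_mul {a : FreeGroup X} (ha : FreeGroup.lift emb a ∈ H) (b : FreeGroup X) :
    (ΦF H emb (a * b)).2 (rcRoot H) =
      (ΦF H emb a).2 (rcRoot H) + (ΦF H emb b).2 (rcRoot H) := by
  rw [map_mul, FlowC.mul_def]
  show (ΦF H emb a).2 (rcRoot H) + (ΦF H emb b).2 (rcStep H (rcRoot H) (ΦF H emb a).1) = _
  rw [ΦF_fst, rcStep_root H ha]

theorem rootflow_inv {a : FreeGroup X} (ha : FreeGroup.lift emb a ∈ H) :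
    (ΦF H emb a⁻¹).2 (rcRoot H) = -(ΦF H emb a).2 (rcRoot H) := by
  rw [map_inv, FlowC.inv_def]
  show -(ΦF H emb a).2 (rcStep H (rcRoot H) (ΦF H emb a).1⁻¹) = _
  rw [ΦF_fst, rcStep_root H (inv_mem ha)]

theorem flow_zero_of_mem_commutator {y : FreeGroup X}
    (hy : y ∈ ⁅H.comap (FreeGroup.lift emb), H.comap (FreeGroup.lift emb)⁆) :
    (ΦF H emb y).2 (rcRoot H) = 0 := by
  let S : Subgroup (FreeGroup X) :=
    { carrier := {w | FreeGroup.lift emb w ∈ H ∧ (ΦF H emb w).2 (rcRoot H) = 0}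
      one_mem' := by
        refine ⟨?_, ?_⟩
        · rw [map_one]; exact one_mem H
        · rw [map_one]; rfl
      mul_mem' := by
        intro a b ha hb
        refine ⟨?_, ?_⟩
        · rw [map_mul]; exact mul_mem ha.1 hb.1
        · rw [rootflow_mul H emb ha.1, ha.2, hb.2, add_zero]
      inv_mem' := by
        intro a ha
        refine ⟨?_, ?_⟩
        · rw [map_inv]; exact inv_mem ha.1
        · rw [rootflow_inv H emb ha.1, ha.2, neg_zero] }
  have hle : ⁅H.comap (FreeGroup.lift emb), H.comap (FreeGroup.lift emb)⁆ ≤ S := by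
    rw [Subgroup.commutator_le]
    intro a ha b hb
    have ha' : FreeGroup.lift emb a ∈ H := Subgroup.mem_comap.mp ha
    have hb' : FreeGroup.lift emb b ∈ H := Subgroup.mem_comap.mp hb
    show FreeGroup.lift emb ⁅a, b⁆ ∈ H ∧ (ΦF H emb ⁅a, b⁆).2 (rcRoot H) = 0
    refine ⟨?_, ?_⟩
    · rw [map_commutatorElement]
      exact mul_mem (mul_mem (mul_mem ha' hb') (inv_mem ha')) (inv_mem hb')
    rw [commutatorElement_def]
    have m2 : FreeGroup.lift emb (a * b) ∈ H := by
      rw [map_mul]; exact mul_mem ha' hb'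
    have m1 : FreeGroup.lift emb (a * b * a⁻¹) ∈ H := by
      rw [map_mul, map_inv]; exact mul_mem m2 (inv_mem ha')
    rw [rootflow_mul H emb m1 b⁻¹, rootflow_mul H emb m2 a⁻¹, rootflow_mul H emb ha' b,
      rootflow_inv H emb ha', rootflow_inv H emb hb']
    abel
  exact (hle hy).2

/-- A transversal for the cosets. -/
noncomputable def sTr : RCoset H → FreeGroup X := fun v =>
  if v = rcRoot H then 1
  else if h : ∃ w : FreeGroup X, (Quotient.mk'' (FreeGroup.lift emb w) : RCoset H) = v then
    h.choose else 1

theorem sTr_root : sTr H emb (rcRoot H) = 1 := if_pos rfl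

theorem sTr_spec (hsur : Function.Surjective (FreeGroup.lift emb)) (v : RCoset H) :
    (Quotient.mk'' (FreeGroup.lift emb (sTr H emb v)) : RCoset H) = v := by
  unfold sTr
  split_ifs with h1 h2
  · rw [map_one, h1]; rfl
  · exact h2.choose_spec
  · exfalso
    apply h2
    obtain ⟨a, rfl⟩ := Quotient.exists_rep v
    obtain ⟨w, hw⟩ := hsur a
    exact ⟨w, by rw [hw]⟩

/-- The element of the free group associated to a path from vertex `v` reading `w`,
closed up through the transversal. -/
noncomputable def eel (v : RCoset H) (w : FreeGroup X) : FreeGroup X :=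
  sTr H emb v * w * (sTr H emb (rcStep H v (FreeGroup.lift emb w)))⁻¹

theorem eel_mem (hsur : Function.Surjective (FreeGroup.lift emb)) (v : RCoset H)
    (w : FreeGroup X) : eel H emb v w ∈ H.comap (FreeGroup.lift emb) := by
  refine Subgroup.mem_comap.mpr ?_
  rw [eel, map_mul, map_mul, map_inv]
  refine mem_of_mk_eq H ?_
  rw [← rcStep_mk, sTr_spec H emb hsur v, sTr_spec H emb hsur]

/-- The Schreier generator of `K` associated to the edge `(v, x)`. -/
noncomputable def nel (v : RCoset H) (x : X) : FreeGroup X :=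
  eel H emb v (FreeGroup.of x)

theorem nel_mem (hsur : Function.Surjective (FreeGroup.lift emb)) (v : RCoset H) (x : X) :
    nel H emb v x ∈ H.comap (FreeGroup.lift emb) :=
  eel_mem H emb hsur v (FreeGroup.of x)

theorem key (hsur : Function.Surjective (FreeGroup.lift emb)) :
    ∀ (c : List (X × Bool)) (v : RCoset H),
      Abelianization.of (⟨eel H emb v (FreeGroup.mk c), eel_mem H emb hsur v _⟩ :
          H.comap (FreeGroup.lift emb)) =
        (flowF H emb v c).prod fun p m =>
          (Abelianization.of (⟨nel H emb p.1 p.2, nel_mem H emb hsur p.1 p.2⟩ :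
            H.comap (FreeGroup.lift emb))) ^ m
  | [], v => by
      have h1 : (⟨eel H emb v (FreeGroup.mk []), eel_mem H emb hsur v _⟩ :
          H.comap (FreeGroup.lift emb)) = 1 := by
        refine Subtype.ext ?_
        show eel H emb v (FreeGroup.mk []) = 1
        rw [eel, ← FreeGroup.one_eq_mk, map_one, rcStep_one, mul_one, mul_inv_cancel]
      rw [h1, map_one, flowF, Finsupp.prod_zero_index]
  | (x, true) :: c, v => by
      have hmk : FreeGroup.mk ((x, true) :: c) = FreeGroup.of x * FreeGroup.mk c := by
        rw [FreeGroup.of, FreeGroup.mul_mk]; rfl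
      have hstep : rcStep H v (FreeGroup.lift emb (FreeGroup.mk ((x, true) :: c))) =
          rcStep H (rcStep H v (emb x)) (FreeGroup.lift emb (FreeGroup.mk c)) := by
        rw [hmk, map_mul, FreeGroup.lift_apply_of, ← rcStep_mul]
      have hsplit : (⟨eel H emb v (FreeGroup.mk ((x, true) :: c)),
            eel_mem H emb hsur v _⟩ : H.comap (FreeGroup.lift emb)) =
          ⟨nel H emb v x, nel_mem H emb hsur v x⟩ *
            ⟨eel H emb (rcStep H v (emb x)) (FreeGroup.mk c),
              eel_mem H emb hsur _ _⟩ := by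
        refine Subtype.ext ?_
        show eel H emb v (FreeGroup.mk ((x, true) :: c)) = nel H emb v x *
          eel H emb (rcStep H v (emb x)) (FreeGroup.mk c)
        rw [nel, eel, eel, eel, hstep, hmk, FreeGroup.lift_apply_of]
        group
      rw [hsplit, map_mul, key hsur c (rcStep H v (emb x)), flowF,
        Finsupp.prod_add_index' (fun p => zpow_zero _) (fun p m n => zpow_add _ m n),
        Finsupp.prod_single_index, zpow_one]
      exact zpow_zero _
  | (x, false) :: c, v => by
      set u := rcStep H v (emb x)⁻¹ with hu
      have hux : rcStep H u (emb x) = v := by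
        rw [hu, rcStep_mul, inv_mul_cancel, rcStep_one]
      have hof : (FreeGroup.of x)⁻¹ = FreeGroup.mk [(x, false)] := by
        rw [FreeGroup.of, FreeGroup.inv_mk]; rfl
      have hmk : FreeGroup.mk ((x, false) :: c) = (FreeGroup.of x)⁻¹ * FreeGroup.mk c := by
        rw [hof, FreeGroup.mul_mk]; rfl
      have hstep : rcStep H v (FreeGroup.lift emb (FreeGroup.mk ((x, false) :: c))) =
          rcStep H u (FreeGroup.lift emb (FreeGroup.mk c)) := by
        rw [hmk, map_mul, map_inv, FreeGroup.lift_apply_of, ← rcStep_mul, hu]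
      have hsplit : (⟨eel H emb v (FreeGroup.mk ((x, false) :: c)),
            eel_mem H emb hsur v _⟩ : H.comap (FreeGroup.lift emb)) =
          (⟨nel H emb u x, nel_mem H emb hsur u x⟩)⁻¹ *
            ⟨eel H emb u (FreeGroup.mk c), eel_mem H emb hsur _ _⟩ := by
        refine Subtype.ext ?_
        show eel H emb v (FreeGroup.mk ((x, false) :: c)) = (nel H emb u x)⁻¹ *
          eel H emb u (FreeGroup.mk c)
        rw [nel, eel, eel, eel, hstep, hmk, FreeGroup.lift_apply_of, hux]
        group
      rw [hsplit, map_mul, map_inv, key hsur c u, flowF,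
        Finsupp.prod_add_index' (fun p => zpow_zero _) (fun p m n => zpow_add _ m n),
        Finsupp.prod_single_index, zpow_neg, zpow_one]
      exact zpow_zero _

theorem mem_commutator_of_flow_zero (hsur : Function.Surjective (FreeGroup.lift emb))
    {y : FreeGroup X} (hy : FreeGroup.lift emb y ∈ H) (c : List (X × Bool))
    (hc : FreeGroup.mk c = y)
    (h0 : flowF H emb (rcRoot H) c = 0) :
    y ∈ ⁅H.comap (FreeGroup.lift emb), H.comap (FreeGroup.lift emb)⁆ := by
  have hkey := key H emb hsur c (rcRoot H)
  rw [h0, Finsupp.prod_zero_index] at hkey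
  have hyK : y ∈ H.comap (FreeGroup.lift emb) := Subgroup.mem_comap.mpr hy
  have heq : (⟨eel H emb (rcRoot H) (FreeGroup.mk c),
      eel_mem H emb hsur (rcRoot H) _⟩ : H.comap (FreeGroup.lift emb)) = ⟨y, hyK⟩ := by
    refine Subtype.ext ?_
    show eel H emb (rcRoot H) (FreeGroup.mk c) = y
    rw [eel, hc, sTr_root, rcStep_root H hy, sTr_root, one_mul,
      inv_one, mul_one]
  rw [heq] at hkey
  have hyc : (⟨y, hyK⟩ : H.comap (FreeGroup.lift emb)) ∈
      commutator (H.comap (FreeGroup.lift emb)) :=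
    (QuotientGroup.eq_one_iff _).mp hkey
  have hmap : y ∈ (commutator (H.comap (FreeGroup.lift emb))).map
      (H.comap (FreeGroup.lift emb)).subtype :=
    ⟨⟨y, hyK⟩, hyc, rfl⟩
  rwa [commutator_def, Subgroup.map_commutator, ← MonoidHom.range_eq_map,
    Subgroup.range_subtype] at hmap

end Stmt13Aux

open Stmt13Aux

/-- The flow defined by `y` on the Schreier graph of the cyclic subgroup `⟨y⟩` of the
free solvable group `S_{r,d-1}` is identically zero if and only if `y = 1` in `S_{r,d}`. -/
theorem stmt13 (r d : ℕ) (hd : 1 ≤ d) (y : FreeGroup (Fin r)) :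
    (vFlow
        (rcStep (Subgroup.zpowers
          (QuotientGroup.mk y :
            FreeGroup (Fin r) ⧸ derivedSeries (FreeGroup (Fin r)) (d - 1))))
        (fun i => (QuotientGroup.mk (FreeGroup.of i) :
            FreeGroup (Fin r) ⧸ derivedSeries (FreeGroup (Fin r)) (d - 1)))
        (rcRoot _) y.toWord = fun _ _ => 0) ↔
      (QuotientGroup.mk y :
          FreeGroup (Fin r) ⧸ derivedSeries (FreeGroup (Fin r)) d) = 1 := by
  set N := derivedSeries (FreeGroup (Fin r)) (d - 1) with hN
  set emb : Fin r → (FreeGroup (Fin r) ⧸ N) :=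
    fun i => (QuotientGroup.mk (FreeGroup.of i)) with hemb
  set H : Subgroup (FreeGroup (Fin r) ⧸ N) :=
    Subgroup.zpowers (QuotientGroup.mk y) with hH
  have hlift : FreeGroup.lift emb = QuotientGroup.mk' N :=
    FreeGroup.ext_hom _ _ fun i => by rw [FreeGroup.lift_apply_of]; rfl
  have hsur : Function.Surjective (FreeGroup.lift emb) := by
    rw [hlift]; exact QuotientGroup.mk'_surjective N
  have hy : FreeGroup.lift emb y ∈ H := by
    rw [hlift]; exact Subgroup.mem_zpowers _
  have hds : derivedSeries (FreeGroup (Fin r)) d = ⁅N, N⁆ := by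
    conv_lhs => rw [← Nat.succ_pred_eq_of_pos hd, derivedSeries_succ]
    rfl
  constructor
  · intro hflow
    have h0 : flowF H emb (rcRoot H) y.toWord = 0 := by
      ext p
      obtain ⟨a, x⟩ := p
      rw [← vFlow_eq_flowF H emb y.toWord (rcRoot H) a x]
      exact congrFun (congrFun hflow a) x
    have hyc := mem_commutator_of_flow_zero H emb hsur hy y.toWord FreeGroup.mk_toWord h0
    have hKN : ⁅H.comap (FreeGroup.lift emb), H.comap (FreeGroup.lift emb)⁆ ≤ N := by
      rw [Subgroup.commutator_le]
      intro a ha b hb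
      have h1 : FreeGroup.lift emb ⁅a, b⁆ = 1 := by
        rw [map_commutatorElement]
        obtain ⟨m, hm⟩ := Subgroup.mem_comap.mp ha
        obtain ⟨n, hn⟩ := Subgroup.mem_comap.mp hb
        rw [← hm, ← hn]
        exact commutatorElement_eq_one_iff_commute.mpr (Commute.zpow_zpow_self _ _ _)
      rw [hlift] at h1
      simpa using (QuotientGroup.eq_one_iff _).mp h1
    have hyN : y ∈ N := hKN hyc
    have hy1 : (QuotientGroup.mk y : FreeGroup (Fin r) ⧸ N) = 1 :=
      (QuotientGroup.eq_one_iff y).mpr hyN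
    rw [hH, hy1, Subgroup.zpowers_one_eq_bot, MonoidHom.comap_bot, hlift,
      QuotientGroup.ker_mk'] at hyc
    exact (QuotientGroup.eq_one_iff y).mpr (hds ▸ hyc)
  · intro h1
    have hyd : y ∈ ⁅N, N⁆ := hds ▸ (QuotientGroup.eq_one_iff y).mp h1
    have hNK : N ≤ H.comap (FreeGroup.lift emb) := by
      intro w hw
      refine Subgroup.mem_comap.mpr ?_
      rw [hlift]
      have : (QuotientGroup.mk' N) w = 1 := (QuotientGroup.eq_one_iff w).mpr hw
      rw [this]
      exact one_mem H
    have hyK := Subgroup.commutator_mono hNK hNK hyd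
    have h0 := flow_zero_of_mem_commutator H emb hyK
    have h0' : flowF H emb (rcRoot H) y.toWord = 0 := by
      have hsnd := ΦF_snd H emb y y.toWord FreeGroup.mk_toWord
      have h2 := congrFun hsnd (rcRoot H)
      rw [← h2, h0]
    funext a x
    rw [vFlow_eq_flowF H emb y.toWord (rcRoot H) a x, h0']
    rfl
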